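/- Let f : ℕⁿ → ℕ₀ be a uniform multiplicative function with associated function g (with polynomial growth bound g(ν) ≤ C(1+|ν|)^M), let S*(g) = {ν ∈ ℕ₀ⁿ\{0} : g(ν) ≠ 0} be nonempty, and let c ∈ (0,∞)ⁿ be a normalized polar vector of the smallest face 𝓕₀(f) of the Newton polyhedron 𝓔(S*(g)) that meets the diagonal, with 𝓕₀(f) compact. Then the multiple Dirichlet series 𝓜(f;s) = Σ_{m∈ℕⁿ} f(m) m₁^{-s₁}⋯m_n^{-s_n} converges absolutely on {s ∈ ℂⁿ : Re(s_i) > c_i for all i}. -/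

import Mathlib

open Finset

private lemma aux_one_add_sum_le_prod {ι : Type*} (s : Finset ι) (a : ι → ℝ)
    (ha : ∀ i, 0 ≤ a i) : 1 + ∑ i ∈ s, a i ≤ ∏ i ∈ s, (1 + a i) := by
  induction s using Finset.cons_induction with
  | empty => simp
  | cons j s hj ih =>
    rw [Finset.sum_cons, Finset.prod_cons]
    have h1 : (0:ℝ) ≤ ∑ i ∈ s, a i := Finset.sum_nonneg fun i _ => ha i
    nlinarith [ha j, ih]

private lemma aux_fact {m : ℕ} (hm : m ≠ 0) {P : Finset ℕ} (hP : m.primeFactors ⊆ P) :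
    ∏ p ∈ P, p ^ m.factorization p = m := by
  have h := Nat.factorization_prod_pow_eq_self hm
  rw [Finsupp.prod] at h
  refine Eq.trans ?_ h
  refine (Finset.prod_subset (by rwa [Nat.support_factorization]) ?_).symm
  intro p _ hps
  rw [Finsupp.notMem_support_iff.mp hps, pow_zero]

private lemma aux_mult {n : ℕ} (f g : (Fin n → ℕ) → ℕ)
    (hmult : ∀ m m' : Fin n → ℕ, (∀ i, 0 < m i) → (∀ i, 0 < m' i) →
      Nat.gcd (Finset.univ.lcm m) (Finset.univ.lcm m') = 1 →
      f (fun i => m i * m' i) = f m * f m')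
    (hpp : ∀ p : ℕ, p.Prime → ∀ ν : Fin n → ℕ, f (fun i => p ^ ν i) = g ν)
    (hone : f (fun _ => 1) = 1) :
    ∀ (P : Finset ℕ), (∀ p ∈ P, p.Prime) → ∀ φ : ℕ → (Fin n → ℕ),
      f (fun i => ∏ p ∈ P, p ^ φ p i) = ∏ p ∈ P, g (φ p) := by
  intro P
  induction P using Finset.induction with
  | empty => intro _ φ; simpa using hone
  | @insert a P ha ih =>
    intro hprime φ
    have hap : a.Prime := hprime a (Finset.mem_insert_self a P)
    have hPp : ∀ p ∈ P, p.Prime := fun p hp => hprime p (Finset.mem_insert_of_mem hp)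
    have hm : ∀ i, 0 < a ^ φ a i := fun i => pow_pos hap.pos _
    have hm' : ∀ i, 0 < ∏ p ∈ P, p ^ φ p i :=
      fun i => Finset.prod_pos fun p hp => pow_pos (hPp p hp).pos _
    have hcop : Nat.Coprime a (∏ i : Fin n, ∏ p ∈ P, p ^ φ p i) := by
      apply Nat.Coprime.prod_right
      intro i _
      apply Nat.Coprime.prod_right
      intro p hp
      exact (Nat.Coprime.pow_right _ ((Nat.coprime_primes hap (hPp p hp)).mpr
        (fun h => ha (h ▸ hp))))
    have hgcd : Nat.gcd (Finset.univ.lcm fun i => a ^ φ a i)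
        (Finset.univ.lcm fun i => ∏ p ∈ P, p ^ φ p i) = 1 := by
      have h1 : (Finset.univ.lcm fun i => a ^ φ a i) ∣ a ^ (∑ i : Fin n, φ a i) := by
        apply Finset.lcm_dvd
        intro i _
        exact pow_dvd_pow a (Finset.single_le_sum (fun j _ => Nat.zero_le _)
          (Finset.mem_univ i))
      have h2 : (Finset.univ.lcm fun i => ∏ p ∈ P, p ^ φ p i) ∣
          ∏ i : Fin n, ∏ p ∈ P, p ^ φ p i := by
        apply Finset.lcm_dvd
        intro i _
        exact Finset.dvd_prod_of_mem _ (Finset.mem_univ i)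
      exact Nat.Coprime.coprime_dvd_left h1
        (Nat.Coprime.coprime_dvd_right h2 (hcop.pow_left _))
    have key := hmult (fun i => a ^ φ a i) (fun i => ∏ p ∈ P, p ^ φ p i) hm hm' hgcd
    simp only [Finset.prod_insert ha]
    rw [key, hpp a hap, ih hPp φ]

private lemma aux_geom {n : ℕ} (hn : 0 < n) (K : Set (Fin n → ℝ))
    (hKorth : K ⊆ {x | ∀ i, 0 ≤ x i}) (c : Fin n → ℝ) (hc : ∀ i, 0 ≤ c i)
    (hglb : IsGLB ((fun x => ∑ i, c i * x i) '' frontier (convexHull ℝ K)) 1)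
    (y : Fin n → ℝ) (hy : y ∈ K) : 1 ≤ ∑ i, c i * y i := by
  set H : Set (Fin n → ℝ) := convexHull ℝ K with hH
  have horth : {x : Fin n → ℝ | ∀ i, 0 ≤ x i} = Set.pi Set.univ (fun _ => Set.Ici (0:ℝ)) := by
    ext x; simp [Set.mem_pi, Pi.le_def]
  have hHorth : H ⊆ {x | ∀ i, 0 ≤ x i} := by
    rw [horth] at hKorth ⊢
    exact convexHull_min hKorth (convex_pi fun i _ => convex_Ici 0)
  have hclorth : closure H ⊆ {x | ∀ i, 0 ≤ x i} := by
    rw [horth] at hHorth ⊢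
    exact closure_minimal hHorth (isClosed_set_pi fun i _ => isClosed_Ici)
  have hy0 : ∀ i, 0 ≤ y i := hKorth hy
  set T : ℝ := (∑ i, y i) + 1 with hT
  have hyleT : ∀ i, y i - T < 0 := by
    intro i
    have : y i ≤ ∑ j, y j := Finset.single_le_sum (fun j _ => hy0 j) (Finset.mem_univ i)
    simp only [hT]; linarith
  set q : ℝ → (Fin n → ℝ) := fun t => fun i => y i - t with hq
  have hqc : Continuous q := continuous_pi fun i => (continuous_const.sub continuous_id)
  set S : Set ℝ := Set.Icc 0 T ∩ q ⁻¹' (closure H) with hSdef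
  have hScl : IsClosed S := isClosed_Icc.inter (isClosed_closure.preimage hqc)
  have hT0 : (0:ℝ) ≤ T := by
    have : (0:ℝ) ≤ ∑ i, y i := Finset.sum_nonneg fun i _ => hy0 i
    simp only [hT]; linarith
  have h0S : (0:ℝ) ∈ S := by
    constructor
    · exact ⟨le_refl 0, hT0⟩
    · have : q 0 = y := by funext i; simp [hq]
      rw [Set.mem_preimage, this]
      exact subset_closure (subset_convexHull ℝ K hy)
  have hSbdd : BddAbove S := (bddAbove_Icc).mono Set.inter_subset_left
  set t₀ : ℝ := sSup S with ht₀def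
  have ht₀S : t₀ ∈ S := hScl.csSup_mem ⟨0, h0S⟩ hSbdd
  have ht₀0 : 0 ≤ t₀ := ht₀S.1.1
  have hTnot : q T ∉ closure H := by
    intro hmem
    have := hclorth hmem ⟨0, hn⟩
    have h2 := hyleT ⟨0, hn⟩
    simp only [hq] at this
    linarith
  have ht₀T : t₀ < T := by
    rcases lt_or_eq_of_le ht₀S.1.2 with h | h
    · exact h
    · exact absurd (h ▸ ht₀S.2) hTnot
  have hfr : q t₀ ∈ frontier H := by
    rw [frontier]
    refine ⟨ht₀S.2, ?_⟩
    intro hint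
    have hopen : IsOpen (q ⁻¹' interior H) := (isOpen_interior).preimage hqc
    rcases Metric.isOpen_iff.mp hopen t₀ hint with ⟨ε, hε, hball⟩
    set t₁ : ℝ := min (t₀ + ε / 2) T with ht₁def
    have ht₁gt : t₀ < t₁ := lt_min (by linarith) ht₀T
    have ht₁ball : t₁ ∈ Metric.ball t₀ ε := by
      rw [Metric.mem_ball, Real.dist_eq, abs_of_pos (by linarith)]
      have : t₁ ≤ t₀ + ε / 2 := min_le_left _ _
      linarith
    have ht₁S : t₁ ∈ S := by
      constructor
      · exact ⟨by linarith, min_le_right _ _⟩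
      · exact subset_closure (interior_subset (hball ht₁ball))
    have := le_csSup hSbdd ht₁S
    rw [← ht₀def] at this
    linarith
  have hlow : 1 ≤ ∑ i, c i * q t₀ i := hglb.1 ⟨q t₀, hfr, rfl⟩
  have hsum : ∑ i, c i * q t₀ i = (∑ i, c i * y i) - t₀ * ∑ i, c i := by
    simp only [hq]
    rw [Finset.mul_sum, ← Finset.sum_sub_distrib]
    apply Finset.sum_congr rfl
    intro i _; ring
  have hc0 : 0 ≤ ∑ i, c i := Finset.sum_nonneg fun i _ => hc i
  nlinarith [mul_nonneg ht₀0 hc0]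
set_option maxHeartbeats 1000000 in
/-- for a uniform multiplicative `f : ℕⁿ → ℕ₀` with prime-power profile
`g`, nonempty support `S*(g)`, and `c ∈ (0,∞)ⁿ` a normalized polar vector of the
smallest face `F₀` of the Newton polyhedron of `S*(g)` meeting the diagonal, `F₀`
compact, the multiple Dirichlet series `𝓜(f;s)` converges absolutely whenever
`Re(s_i) > c_i` for all `i`. -/
theorem stmt8 (n : ℕ) (f g : (Fin n → ℕ) → ℕ) (C M : ℝ) (hC : 0 < C) (hM : 0 < M)
    (hmult : ∀ m m' : Fin n → ℕ, (∀ i, 0 < m i) → (∀ i, 0 < m' i) →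
      Nat.gcd (Finset.univ.lcm m) (Finset.univ.lcm m') = 1 →
      f (fun i => m i * m' i) = f m * f m')
    (huniform : ∀ p : ℕ, p.Prime → ∀ ν : Fin n → ℕ,
      f (fun i => p ^ ν i) = g ν ∧ (g ν : ℝ) ≤ C * (1 + ∑ i, (ν i : ℝ)) ^ M)
    (hS : {ν : Fin n → ℕ | ν ≠ 0 ∧ g ν ≠ 0}.Nonempty)
    (E F₀ : Set (Fin n → ℝ))
    (hE : E = frontier (convexHull ℝ
      (⋃ ν ∈ {ν : Fin n → ℕ | ν ≠ 0 ∧ g ν ≠ 0},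
        {x : Fin n → ℝ | ∀ i, (ν i : ℝ) ≤ x i})))
    (c : Fin n → ℝ) (hcpos : ∀ i, 0 < c i)
    (hglb : IsGLB ((fun x => ∑ i, c i * x i) '' E) 1)
    (hF₀ : F₀ = {x ∈ E | ∑ i, c i * x i = 1})
    (hcompact : IsCompact F₀)
    (hdiag : ∃ t : ℝ, 0 < t ∧ (fun _ => t) ∈ F₀)
    (hsmall : ∀ F : Set (Fin n → ℝ),
      (∃ a : Fin n → ℝ, (∀ i, 0 ≤ a i) ∧ a ≠ 0 ∧
        F = {x ∈ E | ∑ i, a i * x i = sInf ((fun x => ∑ i, a i * x i) '' E)}) →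
      (∃ t : ℝ, 0 < t ∧ (fun _ => t) ∈ F) → F₀ ⊆ F)
    (s : Fin n → ℂ) (hs : ∀ i, c i < (s i).re) :
    Summable (fun m : {m : Fin n → ℕ // ∀ i, 0 < m i} =>
      ‖(f m.1 : ℂ) / ∏ i, (m.1 i : ℂ) ^ (s i)‖) := by
  classical
  obtain ⟨ν₀, hν₀ne, hν₀g⟩ := hS
  have hn : 0 < n := by
    rcases Nat.eq_zero_or_pos n with h | h
    · subst h; exact absurd (funext fun i => i.elim0) hν₀ne
    · exact h
  haveI : Nonempty (Fin n) := ⟨⟨0, hn⟩⟩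
  set σ : Fin n → ℝ := fun i => (s i).re with hσdef
  -- f at the all-ones vector is 1
  have hlcm1 : (Finset.univ.lcm fun _ : Fin n => 1) = 1 :=
    Nat.dvd_one.mp (Finset.lcm_dvd fun i _ => dvd_refl 1)
  have hfm1 : ∀ m : Fin n → ℕ, (∀ i, 0 < m i) → f m = f m * f (fun _ => 1) := by
    intro m hm
    have h := hmult m (fun _ => 1) hm (fun _ => one_pos)
      (by rw [hlcm1, Nat.gcd_one_right])
    simpa using h
  have hone : f (fun _ : Fin n => 1) = 1 := by
    have hsq := hfm1 (fun _ => 1) (fun _ => one_pos)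
    have hcases : f (fun _ : Fin n => 1) = 0 ∨ f (fun _ : Fin n => 1) = 1 := by
      rcases Nat.lt_or_ge (f (fun _ : Fin n => 1)) 2 with h | h
      · omega
      · exfalso; nlinarith
    rcases hcases with h0 | h1
    · exfalso
      apply hν₀g
      have h2 := (huniform 2 Nat.prime_two ν₀).1
      have hz := hfm1 (fun i => 2 ^ ν₀ i) (fun i => pow_pos two_pos _)
      rw [h0, Nat.mul_zero] at hz
      rw [← h2, hz]
    · exact h1
  have hg0 : g 0 = 1 := by
    have h2 := (huniform 2 Nat.prime_two 0).1
    simp only [Pi.zero_apply, pow_zero] at h2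
    rw [← h2, hone]
  -- geometry: support points have ⟨c, ν⟩ ≥ 1
  have hgeom : ∀ ν : Fin n → ℕ, ν ≠ 0 → g ν ≠ 0 → 1 ≤ ∑ i, c i * (ν i : ℝ) := by
    intro ν hne hg
    rw [hE] at hglb
    have hK : (fun i => (ν i : ℝ)) ∈ ⋃ μ ∈ {μ : Fin n → ℕ | μ ≠ 0 ∧ g μ ≠ 0},
        {x : Fin n → ℝ | ∀ i, (μ i : ℝ) ≤ x i} := by
      refine Set.mem_biUnion ⟨hne, hg⟩ ?_
      intro i; exact le_refl _
    have horth : (⋃ μ ∈ {μ : Fin n → ℕ | μ ≠ 0 ∧ g μ ≠ 0},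
        {x : Fin n → ℝ | ∀ i, (μ i : ℝ) ≤ x i}) ⊆ {x | ∀ i, 0 ≤ x i} := by
      intro x hx
      rcases Set.mem_iUnion₂.mp hx with ⟨μ, hμ, hxμ⟩
      intro i; exact le_trans (Nat.cast_nonneg _) (hxμ i)
    exact aux_geom hn _ horth c (fun i => (hcpos i).le) hglb _ hK
  -- constants
  have hσpos : ∀ i, 0 < σ i := fun i => (hcpos i).trans (hs i)
  set θ : ℝ := Finset.univ.inf' Finset.univ_nonempty (fun i => σ i / c i) with hθdef
  have hθ1 : 1 < θ := by
    rw [hθdef, Finset.lt_inf'_iff]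
    intro i _
    exact (one_lt_div (hcpos i)).mpr (hs i)
  have hθle : ∀ i, θ * c i ≤ σ i := by
    intro i
    have h : θ ≤ σ i / c i := by
      rw [hθdef]; exact Finset.inf'_le _ (Finset.mem_univ i)
    exact (le_div_iff₀ (hcpos i)).mp h
  set δ : ℝ := Finset.univ.inf' Finset.univ_nonempty c with hδdef
  have hδpos : 0 < δ := by
    rw [hδdef, Finset.lt_inf'_iff]
    intro i _; exact hcpos i
  have hδle : ∀ i, δ ≤ c i := by
    intro i; rw [hδdef]; exact Finset.inf'_le _ (Finset.mem_univ i)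
  set θ' : ℝ := (θ + 1) / 2 with hθ'def
  have hθ'1 : 1 < θ' := by rw [hθ'def]; linarith
  have hθ'θ : θ' < θ := by rw [hθ'def]; linarith
  set ε : ℝ := (θ - θ') * δ with hεdef
  have hεpos : 0 < ε := by rw [hεdef]; exact mul_pos (by linarith) hδpos
  -- key exponent inequality on the support
  have hkey : ∀ ν : Fin n → ℕ, ν ≠ 0 → g ν ≠ 0 →
      θ' + ε * (∑ i, (ν i : ℝ)) ≤ ∑ i, σ i * (ν i : ℝ) := by
    intro ν hne hg
    have h1 : 1 ≤ ∑ i, c i * (ν i : ℝ) := hgeom ν hne hg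
    have h2 : δ * (∑ i, (ν i : ℝ)) ≤ ∑ i, c i * (ν i : ℝ) := by
      rw [Finset.mul_sum]
      apply Finset.sum_le_sum
      intro i _
      exact mul_le_mul_of_nonneg_right (hδle i) (Nat.cast_nonneg _)
    have h3 : θ * (∑ i, c i * (ν i : ℝ)) ≤ ∑ i, σ i * (ν i : ℝ) := by
      rw [Finset.mul_sum]
      apply Finset.sum_le_sum
      intro i _
      rw [← mul_assoc]
      exact mul_le_mul_of_nonneg_right (hθle i) (Nat.cast_nonneg _)
    have h4 : (θ - θ') * (δ * ∑ i, (ν i : ℝ)) ≤ (θ - θ') * ∑ i, c i * (ν i : ℝ) :=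
      mul_le_mul_of_nonneg_left h2 (by linarith)
    have h5 : θ' * 1 ≤ θ' * ∑ i, c i * (ν i : ℝ) :=
      mul_le_mul_of_nonneg_left h1 (by linarith)
    have h6 : θ' * (∑ i, c i * (ν i : ℝ)) + (θ - θ') * (∑ i, c i * (ν i : ℝ)) =
        θ * (∑ i, c i * (ν i : ℝ)) := by ring
    have h7 : ((θ - θ') * δ) * (∑ i, (ν i : ℝ)) = (θ - θ') * (δ * ∑ i, (ν i : ℝ)) := by ring
    rw [hεdef]
    linarith [h3, h4, h5, h6, h7]
  -- geometric-polynomial comparison constants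
  set r : ℝ := (2:ℝ) ^ (-ε) with hrdef
  have hr0 : 0 < r := Real.rpow_pos_of_pos two_pos _
  have hr1 : r < 1 := Real.rpow_lt_one_of_one_lt_of_neg one_lt_two (neg_lt_zero.mpr hεpos)
  set mnat : ℕ := ⌈M⌉₊ with hmnatdef
  have hhsum : Summable (fun k : ℕ => ((k:ℝ)+1) ^ mnat * r ^ k) := by
    have hu : Summable (fun k : ℕ => (k:ℝ) ^ mnat * r ^ k) :=
      summable_pow_mul_geometric_of_norm_lt_one mnat
        (by rw [Real.norm_eq_abs, abs_of_pos hr0]; exact hr1)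
    have hu1 : Summable (fun k : ℕ => ((k+1:ℕ):ℝ) ^ mnat * r ^ (k+1)) :=
      (summable_nat_add_iff (f := fun k : ℕ => (k:ℝ) ^ mnat * r ^ k) 1).mpr hu
    have hu2 : Summable (fun k : ℕ => (((k+1:ℕ):ℝ) ^ mnat * r ^ (k+1)) * r⁻¹) :=
      hu1.mul_right r⁻¹
    refine hu2.congr ?_
    intro k
    have hrne : r ≠ 0 := ne_of_gt hr0
    push_cast
    rw [pow_succ]
    field_simp
  have hhnn : ∀ k : ℕ, 0 ≤ ((k:ℝ)+1) ^ mnat * r ^ k := by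
    intro k; positivity
  set T : ℝ := ∑' k : ℕ, ((k:ℝ)+1) ^ mnat * r ^ k with hTdef
  have hT0 : 0 ≤ T := tsum_nonneg hhnn
  have hA0 : 0 ≤ C * T ^ n := mul_nonneg hC.le (pow_nonneg hT0 n)
  have hZsum : Summable (fun k : ℕ => (k:ℝ) ^ (-θ')) :=
    Real.summable_nat_rpow.mpr (by linarith)
  set Z : ℝ := ∑' k : ℕ, (k:ℝ) ^ (-θ') with hZdef
  -- growth bound in product form
  have hgb : ∀ ν : Fin n → ℕ, (g ν : ℝ) ≤ C * ∏ i, ((ν i : ℝ) + 1) ^ mnat := by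
    intro ν
    refine le_trans ((huniform 2 Nat.prime_two ν).2) ?_
    apply mul_le_mul_of_nonneg_left _ hC.le
    have hb1 : (1:ℝ) + ∑ i, (ν i : ℝ) ≤ ∏ i, (1 + (ν i : ℝ)) :=
      aux_one_add_sum_le_prod _ _ (fun i => Nat.cast_nonneg _)
    have hnn1 : ∀ i : Fin n, (0:ℝ) ≤ 1 + (ν i : ℝ) := fun i => by positivity
    calc (1 + ∑ i, (ν i : ℝ)) ^ M
        ≤ (∏ i, (1 + (ν i : ℝ))) ^ M := by
          apply Real.rpow_le_rpow (by positivity) hb1 hM.le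
      _ = ∏ i, (1 + (ν i : ℝ)) ^ M :=
          (Real.finset_prod_rpow _ _ (fun i _ => hnn1 i) M).symm
      _ ≤ ∏ i, ((ν i : ℝ) + 1) ^ mnat := by
          apply Finset.prod_le_prod (fun i _ => Real.rpow_nonneg (hnn1 i) M)
          intro i _
          rw [add_comm (1:ℝ) ((ν i : ℝ)), ← Real.rpow_natCast ((ν i : ℝ) + 1) mnat]
          have h1ν : (1:ℝ) ≤ (ν i : ℝ) + 1 := by
            have := Nat.cast_nonneg (α := ℝ) (ν i); linarith
          apply Real.rpow_le_rpow_of_exponent_le h1ν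
          rw [hmnatdef]
          exact Nat.le_ceil M
  -- per-term local bound
  have hpkey : ∀ p : ℕ, p.Prime → ∀ ν : Fin n → ℕ, ν ≠ 0 →
      (g ν : ℝ) * (p:ℝ) ^ (-(∑ i, σ i * (ν i : ℝ))) ≤
      (p:ℝ) ^ (-θ') * (C * ∏ i, (((ν i : ℝ) + 1) ^ mnat * r ^ (ν i))) := by
    intro p hp ν hν
    have hp2 : (2:ℝ) ≤ (p:ℝ) := by exact_mod_cast hp.two_le
    have hp0 : (0:ℝ) < (p:ℝ) := by linarith
    by_cases hgν : g ν = 0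
    · rw [hgν]
      simp only [Nat.cast_zero, zero_mul]
      positivity
    · have hkν := hkey ν hν hgν
      have hsnu0 : 0 ≤ ∑ i, (ν i : ℝ) :=
        Finset.sum_nonneg fun i _ => Nat.cast_nonneg _
      have hepsS : 0 ≤ ε * ∑ i, (ν i : ℝ) := mul_nonneg hεpos.le hsnu0
      have hsplit : (p:ℝ) ^ (-(∑ i, σ i * (ν i : ℝ))) ≤
          (p:ℝ) ^ (-θ') * (2:ℝ) ^ (-(ε * ∑ i, (ν i : ℝ))) := by
        have e1 : (p:ℝ) ^ (-(∑ i, σ i * (ν i : ℝ))) =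
            (p:ℝ) ^ (-θ') * (p:ℝ) ^ (-((∑ i, σ i * (ν i : ℝ)) - θ')) := by
          rw [← Real.rpow_add hp0]
          ring_nf
        rw [e1]
        apply mul_le_mul_of_nonneg_left _ (Real.rpow_nonneg hp0.le _)
        have ha0 : 0 ≤ (∑ i, σ i * (ν i : ℝ)) - θ' := by linarith
        have h2a : (p:ℝ) ^ (-((∑ i, σ i * (ν i : ℝ)) - θ')) ≤
            (2:ℝ) ^ (-((∑ i, σ i * (ν i : ℝ)) - θ')) := by
          rw [Real.rpow_neg hp0.le, Real.rpow_neg (by norm_num : (0:ℝ) ≤ 2)]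
          apply inv_anti₀ (Real.rpow_pos_of_pos two_pos _)
          exact Real.rpow_le_rpow (by norm_num) hp2 ha0
        refine h2a.trans ?_
        apply Real.rpow_le_rpow_of_exponent_le one_le_two
        linarith
      have h2prod : (2:ℝ) ^ (-(ε * ∑ i, (ν i : ℝ))) = ∏ i, r ^ (ν i) := by
        have harg : -(ε * ∑ i, (ν i : ℝ)) = ∑ i, (-ε) * (ν i : ℝ) := by
          rw [Finset.mul_sum, ← Finset.sum_neg_distrib]
          exact Finset.sum_congr rfl (fun i _ => by ring)
        rw [harg, Real.rpow_sum_of_pos two_pos]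
        apply Finset.prod_congr rfl
        intro i _
        rw [Real.rpow_mul (by norm_num : (0:ℝ) ≤ 2), ← hrdef, Real.rpow_natCast]
      have hfin : (g ν : ℝ) * (p:ℝ) ^ (-(∑ i, σ i * (ν i : ℝ))) ≤
          (C * ∏ i, ((ν i : ℝ) + 1) ^ mnat) * ((p:ℝ) ^ (-θ') * ∏ i, r ^ (ν i)) := by
        apply mul_le_mul (hgb ν) (by rw [← h2prod]; exact hsplit)
          (Real.rpow_nonneg hp0.le _) (by positivity)
      refine hfin.trans_eq ?_
      rw [Finset.prod_mul_distrib]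
      ring
  -- local sums over boxes
  have hbox : ∀ N : ℕ,
      ∑ ν ∈ Fintype.piFinset (fun _ : Fin n => Finset.range (N+1)),
        ∏ i, (((ν i : ℝ) + 1) ^ mnat * r ^ (ν i)) ≤ T ^ n := by
    intro N
    calc ∑ ν ∈ Fintype.piFinset (fun _ : Fin n => Finset.range (N+1)),
          ∏ i, (((ν i : ℝ) + 1) ^ mnat * r ^ (ν i))
        = ∏ _i : Fin n, ∑ k ∈ Finset.range (N+1), (((k:ℝ)+1) ^ mnat * r ^ k) := by
          exact (Finset.prod_univ_sum (fun _ : Fin n => Finset.range (N+1))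
            (fun _ k => ((k:ℝ)+1) ^ mnat * r ^ k)).symm
      _ ≤ ∏ _i : Fin n, T := by
          apply Finset.prod_le_prod
          · intro i _
            exact Finset.sum_nonneg fun k _ => hhnn k
          · intro i _
            exact Summable.sum_le_tsum _ (fun k _ => hhnn k) hhsum
      _ = T ^ n := by rw [Finset.prod_const, Finset.card_univ, Fintype.card_fin]
  have hlocal : ∀ p : ℕ, p.Prime → ∀ N : ℕ,
      ∑ ν ∈ Fintype.piFinset (fun _ : Fin n => Finset.range (N+1)),
        (g ν : ℝ) * (p:ℝ) ^ (-(∑ i, σ i * (ν i : ℝ))) ≤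
      1 + (C * T ^ n) * (p:ℝ) ^ (-θ') := by
    intro p hp N
    have hp0 : (0:ℝ) < (p:ℝ) := by exact_mod_cast hp.pos
    have h0mem : (0 : Fin n → ℕ) ∈ Fintype.piFinset (fun _ : Fin n => Finset.range (N+1)) := by
      rw [Fintype.mem_piFinset]
      intro i
      simp
    rw [← Finset.add_sum_erase _ _ h0mem]
    have hterm0 : (g (0 : Fin n → ℕ) : ℝ) * (p:ℝ) ^ (-(∑ i, σ i * (((0 : Fin n → ℕ) i) : ℝ))) = 1 := by
      simp [hg0]
    rw [hterm0]
    apply add_le_add (le_refl _)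
    calc ∑ ν ∈ (Fintype.piFinset (fun _ : Fin n => Finset.range (N+1))).erase 0,
          (g ν : ℝ) * (p:ℝ) ^ (-(∑ i, σ i * (ν i : ℝ)))
        ≤ ∑ ν ∈ (Fintype.piFinset (fun _ : Fin n => Finset.range (N+1))).erase 0,
          ((p:ℝ) ^ (-θ') * C) * ∏ i, (((ν i : ℝ) + 1) ^ mnat * r ^ (ν i)) := by
          apply Finset.sum_le_sum
          intro ν hν
          have hνne : ν ≠ 0 := (Finset.mem_erase.mp hν).1
          refine (hpkey p hp ν hνne).trans_eq ?_
          ring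
      _ ≤ ∑ ν ∈ Fintype.piFinset (fun _ : Fin n => Finset.range (N+1)),
          ((p:ℝ) ^ (-θ') * C) * ∏ i, (((ν i : ℝ) + 1) ^ mnat * r ^ (ν i)) := by
          apply Finset.sum_le_sum_of_subset_of_nonneg (Finset.erase_subset _ _)
          intro ν _ _
          have : (0:ℝ) ≤ (p:ℝ) ^ (-θ') := Real.rpow_nonneg hp0.le _
          positivity
      _ = ((p:ℝ) ^ (-θ') * C) * ∑ ν ∈ Fintype.piFinset (fun _ : Fin n => Finset.range (N+1)),
          ∏ i, (((ν i : ℝ) + 1) ^ mnat * r ^ (ν i)) := by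
          rw [Finset.mul_sum]
      _ ≤ ((p:ℝ) ^ (-θ') * C) * T ^ n := by
          apply mul_le_mul_of_nonneg_left (hbox N)
          have : (0:ℝ) ≤ (p:ℝ) ^ (-θ') := Real.rpow_nonneg hp0.le _
          positivity
      _ = (C * T ^ n) * (p:ℝ) ^ (-θ') := by ring
  -- final assembly
  apply summable_of_sum_le (c := Real.exp ((C * T ^ n) * Z))
    (Pi.le_def.mpr fun m => norm_nonneg _)
  intro u
  set N : ℕ := u.sup (fun m => Finset.univ.sup m.1) with hNdef
  have hNle : ∀ m ∈ u, ∀ i, m.1 i ≤ N := by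
    intro m hm i
    have h1 : m.1 i ≤ Finset.univ.sup m.1 := Finset.le_sup (Finset.mem_univ i)
    have h2 : Finset.univ.sup m.1 ≤ N := by
      rw [hNdef]
      exact Finset.le_sup
        (f := fun m : {m : Fin n → ℕ // ∀ i, 0 < m i} => Finset.univ.sup m.1) hm
    exact le_trans h1 h2
  set P : Finset ℕ := (Finset.range (N+1)).filter Nat.Prime with hPdef
  have hPprime : ∀ p ∈ P, p.Prime := by
    intro p hp; exact (Finset.mem_filter.mp hp).2
  have hfactor : ∀ m ∈ u, ∀ i, ∏ p ∈ P, p ^ ((m.1 i).factorization p) = m.1 i := by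
    intro m hm i
    apply aux_fact (m.2 i).ne'
    intro p hpf
    obtain ⟨hpp, hdvd, hne⟩ := Nat.mem_primeFactors.mp hpf
    rw [hPdef, Finset.mem_filter, Finset.mem_range]
    exact ⟨Nat.lt_succ_of_le (le_trans (Nat.le_of_dvd (m.2 i) hdvd) (hNle m hm i)), hpp⟩
  set Ψ : {m : Fin n → ℕ // ∀ i, 0 < m i} → ({x // x ∈ P} → Fin n → ℕ) :=
    fun m => fun q => fun i => (m.1 i).factorization q.1 with hΨdef
  -- the term identity
  have hFm : ∀ m ∈ u, ‖(f m.1 : ℂ) / ∏ i, (m.1 i : ℂ) ^ (s i)‖ =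
      ∏ q : {x // x ∈ P}, ((g (Ψ m q) : ℝ) * ((q.1:ℕ):ℝ) ^ (-(∑ i, σ i * ((Ψ m q i) : ℝ)))) := by
    intro m hm
    have hnorm : ‖(f m.1 : ℂ) / ∏ i, (m.1 i : ℂ) ^ (s i)‖ =
        (f m.1 : ℝ) * ∏ i, (m.1 i : ℝ) ^ (-(σ i)) := by
      rw [norm_div, norm_prod, Complex.norm_natCast, div_eq_mul_inv,
        ← Finset.prod_inv_distrib]
      congr 1
      apply Finset.prod_congr rfl
      intro i _
      rw [Complex.norm_natCast_cpow_of_pos (m.2 i)]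
      exact (Real.rpow_neg (Nat.cast_nonneg _) _).symm
    have hf1 : (f m.1 : ℝ) = ∏ q : {x // x ∈ P}, (g (Ψ m q) : ℝ) := by
      have hfm : f m.1 = ∏ p ∈ P, g (fun i => (m.1 i).factorization p) := by
        have haux := aux_mult f g hmult (fun p hp ν => (huniform p hp ν).1) hone P hPprime
          (fun p => fun i => (m.1 i).factorization p)
        rw [← haux]
        congr 1
        funext i
        rw [hfactor m hm i]
      simp only [hΨdef]
      have hcast : (f m.1 : ℝ) = ∏ p ∈ P, (g (fun i => (m.1 i).factorization p) : ℝ) := by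
        rw [hfm]; push_cast; rfl
      rw [hcast]
      exact (Finset.prod_coe_sort P
        (fun p => (g (fun i => (m.1 i).factorization p) : ℝ))).symm
    have hprod : ∏ i, (m.1 i : ℝ) ^ (-(σ i)) =
        ∏ q : {x // x ∈ P}, ((q.1:ℕ):ℝ) ^ (-(∑ i, σ i * ((Ψ m q i) : ℝ))) := by
      have hmi : ∀ i, (m.1 i : ℝ) = ∏ p ∈ P, ((p:ℕ):ℝ) ^ ((m.1 i).factorization p) := by
        intro i
        conv_lhs => rw [← hfactor m hm i]
        push_cast
        rfl
      simp only [hΨdef]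
      refine Eq.trans ?_ (Finset.prod_coe_sort P
        (fun p => ((p:ℕ):ℝ) ^ (-(∑ i, σ i * (((m.1 i).factorization p) : ℝ))))).symm
      calc ∏ i, (m.1 i : ℝ) ^ (-(σ i))
          = ∏ i, ∏ p ∈ P, (((p:ℕ):ℝ) ^ ((m.1 i).factorization p)) ^ (-(σ i)) := by
            apply Finset.prod_congr rfl
            intro i _
            rw [hmi i]
            rw [Real.finset_prod_rpow P _ (fun p _ => by positivity) _]
        _ = ∏ p ∈ P, ∏ i, (((p:ℕ):ℝ) ^ ((m.1 i).factorization p)) ^ (-(σ i)) :=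
            Finset.prod_comm
        _ = ∏ p ∈ P, ((p:ℕ):ℝ) ^ (-(∑ i, σ i * (((m.1 i).factorization p) : ℝ))) := by
            apply Finset.prod_congr rfl
            intro p hp
            have hp0 : (0:ℝ) < ((p:ℕ):ℝ) := by exact_mod_cast (hPprime p hp).pos
            have harg : -(∑ i, σ i * (((m.1 i).factorization p) : ℝ)) =
                ∑ i, ((((m.1 i).factorization p) : ℝ) * (-(σ i))) := by
              rw [← Finset.sum_neg_distrib]
              exact Finset.sum_congr rfl (fun i _ => by ring)
            rw [harg, Real.rpow_sum_of_pos hp0]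
            apply Finset.prod_congr rfl
            intro i _
            rw [← Real.rpow_natCast ((p:ℕ):ℝ) ((m.1 i).factorization p),
              ← Real.rpow_mul hp0.le]
    rw [hnorm, hf1, hprod, ← Finset.prod_mul_distrib]
  -- injectivity
  have hinj : ∀ x ∈ u, ∀ y ∈ u, Ψ x = Ψ y → x = y := by
    intro m hm m' hm' heq
    apply Subtype.ext
    funext i
    rw [← hfactor m hm i, ← hfactor m' hm' i]
    apply Finset.prod_congr rfl
    intro p hp
    have h := congrFun (congrFun heq ⟨p, hp⟩) i
    simp only [hΨdef] at h
    rw [h]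
  have himg : u.image Ψ ⊆ Fintype.piFinset
      (fun _ : {x // x ∈ P} => Fintype.piFinset (fun _ : Fin n => Finset.range (N+1))) := by
    intro φ hφ
    obtain ⟨m, hm, rfl⟩ := Finset.mem_image.mp hφ
    rw [Fintype.mem_piFinset]
    intro q
    rw [Fintype.mem_piFinset]
    intro i
    rw [Finset.mem_range]
    have h1 : (m.1 i).factorization q.1 < m.1 i := Nat.factorization_lt _ (m.2 i).ne'
    have h2 := hNle m hm i
    exact lt_of_lt_of_le h1 (le_trans h2 (Nat.le_succ N))
  have hLnn : ∀ φ : {x // x ∈ P} → Fin n → ℕ, 0 ≤ ∏ q : {x // x ∈ P},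
      ((g (φ q) : ℝ) * ((q.1:ℕ):ℝ) ^ (-(∑ i, σ i * ((φ q i) : ℝ)))) := by
    intro φ
    apply Finset.prod_nonneg
    intro q _
    have : (0:ℝ) ≤ ((q.1:ℕ):ℝ) := Nat.cast_nonneg _
    positivity
  calc ∑ m ∈ u, ‖(f m.1 : ℂ) / ∏ i, (m.1 i : ℂ) ^ (s i)‖
      = ∑ m ∈ u, ∏ q : {x // x ∈ P},
          ((g (Ψ m q) : ℝ) * ((q.1:ℕ):ℝ) ^ (-(∑ i, σ i * ((Ψ m q i) : ℝ)))) :=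
        Finset.sum_congr rfl hFm
    _ = ∑ φ ∈ u.image Ψ, ∏ q : {x // x ∈ P},
          ((g (φ q) : ℝ) * ((q.1:ℕ):ℝ) ^ (-(∑ i, σ i * ((φ q i) : ℝ)))) :=
        (Finset.sum_image (f := fun φ : {x // x ∈ P} → Fin n → ℕ =>
          ∏ q : {x // x ∈ P},
            ((g (φ q) : ℝ) * ((q.1:ℕ):ℝ) ^ (-(∑ i, σ i * ((φ q i) : ℝ))))) hinj).symm
    _ ≤ ∑ φ ∈ Fintype.piFinset
          (fun _ : {x // x ∈ P} => Fintype.piFinset (fun _ : Fin n => Finset.range (N+1))),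
          ∏ q : {x // x ∈ P},
          ((g (φ q) : ℝ) * ((q.1:ℕ):ℝ) ^ (-(∑ i, σ i * ((φ q i) : ℝ)))) :=
        Finset.sum_le_sum_of_subset_of_nonneg himg (fun φ _ _ => hLnn φ)
    _ = ∏ q : {x // x ∈ P}, ∑ ν ∈ Fintype.piFinset (fun _ : Fin n => Finset.range (N+1)),
          ((g ν : ℝ) * ((q.1:ℕ):ℝ) ^ (-(∑ i, σ i * ((ν i) : ℝ)))) :=
        by exact (Finset.prod_univ_sum
          (fun _ : {x // x ∈ P} => Fintype.piFinset (fun _ : Fin n => Finset.range (N+1)))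
          (fun (q : {x // x ∈ P}) (ν : Fin n → ℕ) =>
            (g ν : ℝ) * ((q.1:ℕ):ℝ) ^ (-(∑ i, σ i * ((ν i) : ℝ))))).symm
    _ ≤ ∏ q : {x // x ∈ P}, (1 + (C * T ^ n) * ((q.1:ℕ):ℝ) ^ (-θ')) := by
        apply Finset.prod_le_prod
        · intro q _
          apply Finset.sum_nonneg
          intro ν _
          have : (0:ℝ) ≤ ((q.1:ℕ):ℝ) := Nat.cast_nonneg _
          positivity
        · intro q _
          exact hlocal q.1 (hPprime q.1 q.2) N
    _ ≤ ∏ q : {x // x ∈ P}, Real.exp ((C * T ^ n) * ((q.1:ℕ):ℝ) ^ (-θ')) := by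
        apply Finset.prod_le_prod
        · intro q _
          have h1 : (0:ℝ) ≤ (C * T ^ n) * ((q.1:ℕ):ℝ) ^ (-θ') :=
            mul_nonneg hA0 (Real.rpow_nonneg (Nat.cast_nonneg _) _)
          linarith
        · intro q _
          linarith [Real.add_one_le_exp ((C * T ^ n) * ((q.1:ℕ):ℝ) ^ (-θ'))]
    _ = Real.exp (∑ q : {x // x ∈ P}, (C * T ^ n) * ((q.1:ℕ):ℝ) ^ (-θ')) :=
        (Real.exp_sum _ _).symm
    _ ≤ Real.exp ((C * T ^ n) * Z) := by
        rw [Real.exp_le_exp, ← Finset.mul_sum]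
        apply mul_le_mul_of_nonneg_left _ hA0
        refine le_trans (le_of_eq (Finset.sum_coe_sort P
          (fun p => ((p:ℕ):ℝ) ^ (-θ')))) ?_
        rw [hZdef]
        exact Summable.sum_le_tsum P (fun k _ => Real.rpow_nonneg (Nat.cast_nonneg k) _) hZsum
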